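/- Let 𝓔 be a collection of admissible subsets of ℝ^d, let Q ∈ 𝓔, and let 𝓔(Q) denote the collection of sets of 𝓔 contained in Q. Let τ ∈ (0,1/2) and s ∈ (0,1/2) be such that (τ,s) is a John–Strömberg pair for 𝓔. Let f : Q → ℕ ∪ {0} be measurable with J(f,E,s) ≤ 1/2 for every E ∈ 𝓔(Q), and let σ satisfy 2τ/(1+2τ) < σ ≤ 1/2. Then for every bounded closed subinterval I' of positive length contained in I = (0, λ(Q)), one has J(f^*, I', σ) ≤ sup_{E ∈ 𝓔(Q)} J(f, E, s), where f^* is the non-increasing rearrangement of f. -/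

import Mathlib

open MeasureTheory Set

/-- The John–Strömberg functional
`J(f,E,s) = inf_{c ∈ ℝ} inf {α ≥ 0 : μ({x ∈ E : |f(x) − c| > α}) < s·μ(E)}`. -/
noncomputable def JS {X : Type*} [MeasurableSpace X] (μ : Measure X)
    (f : X → ℝ) (E : Set X) (s : ℝ) : ℝ :=
  sInf {α : ℝ | 0 ≤ α ∧ ∃ c : ℝ, μ {x ∈ E | α < |f x - c|} < ENNReal.ofReal s * μ E}

/-- An admissible set: measurable with positive finite measure. -/
def Admissible {X : Type*} [MeasurableSpace X] (μ : Measure X) (E : Set X) : Prop :=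
  MeasurableSet E ∧ 0 < μ E ∧ μ E < ⊤

/-- `(τ,s)` is a John–Strömberg pair for the collection `𝓔`. -/
def IsJSPair {X : Type*} [MeasurableSpace X] (μ : Measure X)
    (𝓔 : Set (Set X)) (τ s : ℝ) : Prop :=
  0 < τ ∧ 0 < s ∧
  ∀ Q ∈ 𝓔, ∀ Ep Em G : Set X,
    MeasurableSet Ep → MeasurableSet Em → MeasurableSet G →
    Disjoint Ep Em → Disjoint Ep G → Disjoint Em G →
    Q = Ep ∪ Em ∪ G →
    ENNReal.ofReal τ * μ G < min (μ Ep) (μ Em) →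
    ∃ W ∈ 𝓔, W ⊆ Q ∧ ENNReal.ofReal s * μ W ≤ min (μ (W ∩ Ep)) (μ (W ∩ Em))

/-- The non-increasing rearrangement `g^*(t) = inf {α > 0 : μ({x : g x > α}) ≤ t}`. -/
noncomputable def rearr {X : Type*} [MeasurableSpace X] (μ : Measure X)
    (g : X → ℝ) (t : ℝ) : ℝ :=
  sInf {α : ℝ | 0 < α ∧ μ {x | α < g x} ≤ ENNReal.ofReal t}

lemma JS_nonneg {X : Type*} [MeasurableSpace X] (μ : Measure X)
    (f : X → ℝ) (E : Set X) (s : ℝ) : 0 ≤ JS μ f E s :=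
  Real.sInf_nonneg fun _ hx => hx.1

lemma JS_le {X : Type*} [MeasurableSpace X] (μ : Measure X)
    (f : X → ℝ) (E : Set X) (s : ℝ) (K : ℝ) (hK : 0 ≤ K)
    (h : ∃ c, μ {x ∈ E | K < |f x - c|} < ENNReal.ofReal s * μ E) :
    JS μ f E s ≤ K := by
  obtain ⟨c, hc⟩ := h
  refine le_of_forall_pos_le_add fun ε hε => ?_
  refine csInf_le ⟨0, fun x hx => hx.1⟩ ⟨by linarith, c, lt_of_le_of_lt (measure_mono ?_) hc⟩
  rintro x ⟨hxE, hx⟩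
  exact ⟨hxE, lt_of_le_of_lt (by linarith) hx⟩

lemma JS_ge {X : Type*} [MeasurableSpace X] (μ : Measure X)
    (f : X → ℝ) (hf : Measurable f) (W : Set X) (hW : MeasurableSet W)
    (hW0 : 0 < μ W) (hWfin : μ W < ⊤) (s : ℝ) (hs : 0 < s)
    (P Mm : Set X) (hP : P ⊆ W) (hM : Mm ⊆ W) (θ γ : ℝ)
    (hPv : ∀ x ∈ P, f x ≤ θ) (hMv : ∀ x ∈ Mm, θ + γ ≤ f x)
    (hmin : ENNReal.ofReal s * μ W ≤ min (μ P) (μ Mm)) :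
    γ / 2 ≤ JS μ f W s := by
  have hspos : 0 < ENNReal.ofReal s * μ W :=
    ENNReal.mul_pos (ENNReal.ofReal_pos.2 hs).ne' hW0.ne'
  have hne : Set.Nonempty {α : ℝ | 0 ≤ α ∧ ∃ c : ℝ,
      μ {x ∈ W | α < |f x - c|} < ENNReal.ofReal s * μ W} := by
    have hmeas : ∀ n : ℕ, NullMeasurableSet {x ∈ W | (n:ℝ) < |f x - 0|} μ := by
      intro n
      exact (hW.inter (measurableSet_lt measurable_const
        ((hf.sub measurable_const).abs))).nullMeasurableSet
    have hanti : Antitone fun n : ℕ => {x ∈ W | (n:ℝ) < |f x - 0|} := by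
      intro p q hpq x hx
      exact ⟨hx.1, lt_of_le_of_lt (by exact_mod_cast hpq) hx.2⟩
    have hfin : ∃ n : ℕ, μ {x ∈ W | (n:ℝ) < |f x - 0|} ≠ ⊤ :=
      ⟨0, (lt_of_le_of_lt (measure_mono fun x hx => hx.1) hWfin).ne⟩
    have hiInter : (⋂ n : ℕ, {x ∈ W | (n:ℝ) < |f x - 0|}) = ∅ := by
      ext x
      simp only [mem_iInter, mem_setOf_eq, mem_empty_iff_false, iff_false, not_forall]
      obtain ⟨n, hn⟩ := exists_nat_gt |f x - 0|
      exact ⟨n, fun h => absurd h.2 (not_lt.2 hn.le)⟩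
    have htend := MeasureTheory.tendsto_measure_iInter_atTop hmeas hanti hfin
    rw [hiInter, measure_empty] at htend
    obtain ⟨n, hn⟩ := (htend.eventually_lt_const hspos).exists
    exact ⟨n, n.cast_nonneg, 0, hn⟩
  refine le_csInf hne ?_
  rintro α ⟨hα0, c, hc⟩
  by_contra hlt
  push_neg at hlt
  rcases le_or_gt c (θ + γ / 2) with h1 | h1
  · have hsub : Mm ⊆ {x ∈ W | α < |f x - c|} := by
      intro x hx
      have := hMv x hx
      exact ⟨hM hx, lt_of_lt_of_le (by linarith) (le_abs_self _)⟩
    exact absurd hc (not_lt.2 (le_trans (hmin.trans (min_le_right _ _))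
      (measure_mono hsub)))
  · have hsub : P ⊆ {x ∈ W | α < |f x - c|} := by
      intro x hx
      have := hPv x hx
      have h2 : α < -(f x - c) := by linarith
      exact ⟨hP hx, lt_of_lt_of_le h2 (neg_le_abs _)⟩
    exact absurd hc (not_lt.2 (le_trans (hmin.trans (min_le_left _ _))
      (measure_mono hsub)))

lemma select {M a b τ σ : ℝ} (ha : 0 < a) (hab : a < b) (hbM : b < M)
    (hτ : 0 < τ) (hσ : 2 * τ / (1 + 2 * τ) < σ)
    (W : ℕ → ℝ) (hmono : Antitone W) (hW0 : W 0 = M)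
    (hcon : ∀ k, min (M - W k) (W (k + 1)) ≤ τ * (W k - W (k + 1)))
    (hsmall : ∃ k, W k ≤ a) :
    ∃ i : ℕ, 1 ≤ i ∧
      max (min (W (i + 1)) b - a) 0 + max (b - max (W (i - 1)) a) 0 < σ * (b - a) := by
  classical
  have hσpos : 0 < σ := lt_of_lt_of_le (by positivity) hσ.le
  have hba : 0 < b - a := by linarith
  have hgoalpos : 0 < σ * (b - a) := by positivity
  set K := Nat.find hsmall with hKdef
  have hKspec : W K ≤ a := Nat.find_spec hsmall
  have hKmin : ∀ k, k < K → a < W k := fun k hk => not_le.1 (Nat.find_min hsmall hk)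
  have hK1 : 1 ≤ K := by
    rcases Nat.eq_zero_or_pos K with h | h
    · exfalso; rw [h, hW0] at hKspec; linarith
    · exact h
  by_cases hcase : W (K - 1) < b
  · have hrex : ∃ k, W k < b := ⟨K - 1, hcase⟩
    set r := Nat.find hrex with hrdef
    have hrspec : W r < b := Nat.find_spec hrex
    have hrmin : ∀ k, k < r → b ≤ W k := fun k hk => not_lt.1 (Nat.find_min hrex hk)
    have hr1 : 1 ≤ r := by
      rcases Nat.eq_zero_or_pos r with h | h
      · exfalso; rw [h, hW0] at hrspec; linarith
      · exact h
    have hrK : r ≤ K - 1 := Nat.find_le hcase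
    have hPex : ∃ k, r ≤ k ∧ ∀ i, k ≤ i → i + 1 ≤ K - 1 →
        W (i + 1) ≤ τ * (W i - W (i + 1)) := by
      refine ⟨K - 1, hrK, fun i hi hi1 => absurd (le_trans hi1 hi) (by omega)⟩
    set j := Nat.find hPex with hjdef
    obtain ⟨hjr, hjL⟩ : r ≤ j ∧ ∀ i, j ≤ i → i + 1 ≤ K - 1 →
        W (i + 1) ≤ τ * (W i - W (i + 1)) := Nat.find_spec hPex
    have hjK : j ≤ K - 1 := Nat.find_le ⟨hrK, fun i hi hi1 => absurd (le_trans hi1 hi) (by omega)⟩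
    have hj1 : 1 ≤ j := le_trans hr1 hjr
    have hja : a < W j := hKmin j (by omega)
    have hjb : W j < b := lt_of_le_of_lt (hmono hjr) hrspec
    have hj1a : a < W (j - 1) := hKmin (j - 1) (by omega)
    set cj := W j with hcj
    set cm := min b (W (j - 1)) with hcm
    set cp := max (W (j + 1)) a with hcp
    have hT1 : max (min (W (j + 1)) b - a) 0 = cp - a := by
      rcases le_total (W (j + 1)) a with h | h
      · rw [max_eq_right, hcp, max_eq_right h]
        · ring
        · have : min (W (j + 1)) b ≤ a := le_trans (min_le_left _ _) h
          linarith
      · rw [hcp, max_eq_left h, min_eq_left (le_of_lt (lt_of_le_of_lt (hmono (Nat.le_succ j)) hjb)),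
          max_eq_left (by linarith)]
    have hT2 : max (b - max (W (j - 1)) a) 0 = b - cm := by
      rw [max_eq_left hj1a.le]
      rcases le_total b (W (j - 1)) with h | h
      · rw [hcm, min_eq_left h, max_eq_right (by linarith)]; ring
      · rw [hcm, min_eq_right h, max_eq_left (by linarith)]
    have hcpcj : cp ≤ cj := max_le (hmono (Nat.le_succ j)) hja.le
    have hcjcm : cj ≤ cm := le_min hjb.le (hmono (Nat.sub_le j 1))
    have hT1b : cp - a ≤ τ * (cj - cp) := by
      by_cases hjK2 : j + 1 ≤ K - 1
      · have hL := hjL j le_rfl hjK2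
        have hj1a' : a < W (j + 1) := hKmin (j + 1) (by omega)
        rw [hcp, max_eq_left hj1a'.le]
        have : W (j + 1) ≤ τ * (W j - W (j + 1)) := hL
        linarith
      · have hKj : K ≤ j + 1 := by omega
        have hwa : W (j + 1) ≤ a := le_trans (hmono hKj) hKspec
        have hcpa : cp = a := by rw [hcp, max_eq_right hwa]
        rw [hcpa]
        have : 0 ≤ τ * (cj - a) := mul_nonneg hτ.le (by linarith)
        linarith
    have hT2b : b - cm ≤ τ * (cm - cj) := by
      by_cases hjr2 : j = r
      · have hbw : b ≤ W (j - 1) := hrmin (j - 1) (by omega)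
        have hcmb : cm = b := by rw [hcm, min_eq_left hbw]
        rw [hcmb]
        have : 0 ≤ τ * (b - cj) := mul_nonneg hτ.le (by linarith)
        linarith
      · have hjr' : r ≤ j - 1 := by omega
        have hnP : ¬ (r ≤ j - 1 ∧ ∀ i, j - 1 ≤ i → i + 1 ≤ K - 1 →
            W (i + 1) ≤ τ * (W i - W (i + 1))) := Nat.find_min hPex (by omega)
        push_neg at hnP
        obtain ⟨i, hi1, hi2, hi3⟩ := hnP hjr'
        have hij : i = j - 1 := by
          by_contra hne
          have hji : j ≤ i := by omega
          exact absurd (hjL i hji hi2) (not_le.2 hi3)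
        subst hij
        have hj1' : j - 1 + 1 = j := Nat.succ_pred_eq_of_pos hj1
        have hcon' := hcon (j - 1)
        rw [hj1'] at hcon' hi3
        have hH : M - W (j - 1) ≤ τ * (W (j - 1) - W j) := by
          rcases min_le_iff.1 hcon' with h | h
          · exact h
          · exact absurd h (not_le.2 hi3)
        have hjb' : W (j - 1) < b := lt_of_le_of_lt (hmono hjr') hrspec
        rw [hcm, min_eq_right hjb'.le]
        linarith
    refine ⟨j, hj1, ?_⟩
    rw [hT1, hT2]
    have hsum : (cp - a) + (b - cm) ≤ τ * (cm - cp) := by linarith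
    have hkey : 2 * τ < σ * (1 + 2 * τ) := by
      rw [div_lt_iff₀ (by linarith)] at hσ
      linarith
    nlinarith [mul_pos hτ hba, mul_nonneg hτ.le (sub_nonneg.2 (le_trans hcpcj hcjcm))]
  · push_neg at hcase
    refine ⟨K, hK1, ?_⟩
    have h1 : min (W (K + 1)) b - a ≤ 0 := by
      have : W (K + 1) ≤ a := le_trans (hmono (Nat.le_succ K)) hKspec
      have := le_trans (min_le_left (W (K + 1)) b) this
      linarith
    have h2 : b - max (W (K - 1)) a ≤ 0 := by
      have : b ≤ max (W (K - 1)) a := le_trans hcase (le_max_left _ _)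
      linarith
    rw [max_eq_right h1, max_eq_right h2]
    simpa using hgoalpos

theorem stmt4 {d : ℕ} (𝓔 : Set (Set (Fin d → ℝ)))
    (h𝓔 : ∀ E ∈ 𝓔, Admissible volume E)
    (Q : Set (Fin d → ℝ)) (hQ : Q ∈ 𝓔)
    (τ s : ℝ) (hτ : τ ∈ Set.Ioo (0:ℝ) (1/2)) (hs : s ∈ Set.Ioo (0:ℝ) (1/2))
    (hpair : IsJSPair volume 𝓔 τ s)
    (f : (Fin d → ℝ) → ℝ) (hf : Measurable f)
    (hfnat : ∀ x ∈ Q, ∃ n : ℕ, f x = n)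
    (hfJ : ∀ E ∈ 𝓔, E ⊆ Q → JS volume f E s ≤ 1/2)
    (σ : ℝ) (hσ1 : 2 * τ / (1 + 2 * τ) < σ) (hσ2 : σ ≤ 1/2)
    (a b : ℝ) (ha : 0 < a) (hab : a < b) (hb : b < (volume Q).toReal) :
    JS volume (rearr volume (Q.indicator f)) (Set.Icc a b) σ ≤
      ⨆ E : {E : Set (Fin d → ℝ) // E ∈ 𝓔 ∧ E ⊆ Q}, JS volume f E.1 s := by
  classical
  obtain ⟨hτ0, hτh⟩ := hτ
  obtain ⟨hs0, hsh⟩ := hs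
  obtain ⟨_, _, hpairmain⟩ := hpair
  obtain ⟨measQ, hQpos, hQfin⟩ := h𝓔 Q hQ
  have hσpos : 0 < σ := lt_of_lt_of_le (by positivity) hσ1.le
  set g := Q.indicator f with hgdef
  have hg : Measurable g := hf.indicator measQ
  have hgnat : ∀ x, ∃ k : ℕ, g x = k := by
    intro x
    by_cases hx : x ∈ Q
    · obtain ⟨n, hn⟩ := hfnat x hx
      exact ⟨n, by rw [hgdef, indicator_of_mem hx]; exact hn⟩
    · exact ⟨0, by rw [hgdef, indicator_of_notMem hx]; simp⟩
  set A : ℕ → Set (Fin d → ℝ) := fun n => {x | (n:ℝ) < g x} with hAdef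
  have hAQ : ∀ n, A n ⊆ Q := by
    intro n x hx
    by_contra hxQ
    have h0 : g x = 0 := by rw [hgdef]; exact indicator_of_notMem hxQ f
    have : (n:ℝ) < g x := hx
    rw [h0] at this
    exact absurd this (not_lt.2 (Nat.cast_nonneg n))
  have hAf : ∀ n, A n = {x ∈ Q | (n:ℝ) < f x} := by
    intro n; ext x
    constructor
    · intro hx
      have hxQ := hAQ n hx
      have : (n:ℝ) < g x := hx
      rw [hgdef, indicator_of_mem hxQ] at this
      exact ⟨hxQ, this⟩
    · rintro ⟨hxQ, hx⟩
      show (n:ℝ) < g x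
      rw [hgdef, indicator_of_mem hxQ]
      exact hx
  have hAmeas : ∀ n, MeasurableSet (A n) := fun n => measurableSet_lt measurable_const hg
  have hAanti : Antitone A := by
    intro p q hpq x hx
    have : (q:ℝ) < g x := hx
    exact lt_of_le_of_lt (by exact_mod_cast hpq) this
  set mE : ℕ → ENNReal := fun n => volume (A n) with hmdef
  have hmQ : ∀ n, mE n ≤ volume Q := fun n => measure_mono (hAQ n)
  have hmfin : ∀ n, mE n ≠ ⊤ := fun n => (lt_of_le_of_lt (hmQ n) hQfin).ne
  have hmanti : ∀ p q : ℕ, p ≤ q → mE q ≤ mE p := fun p q h => measure_mono (hAanti h)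
  have hm0 : Filter.Tendsto mE Filter.atTop (nhds 0) := by
    have hiInter : (⋂ n, A n) = ∅ := by
      ext x
      simp only [mem_iInter, mem_empty_iff_false, iff_false, not_forall]
      obtain ⟨n, hn⟩ := exists_nat_gt (g x)
      exact ⟨n, fun h => absurd h (not_lt.2 hn.le)⟩
    have := MeasureTheory.tendsto_measure_iInter_atTop
      (fun n => (hAmeas n).nullMeasurableSet) hAanti ⟨0, hmfin 0⟩
    rwa [hiInter, measure_empty] at this
  have hsmallE : ∃ n, mE n ≤ ENNReal.ofReal a := by
    obtain ⟨n, hn⟩ := (hm0.eventually_lt_const (ENNReal.ofReal_pos.2 ha)).exists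
    exact ⟨n, hn.le⟩
  have hbdd : BddAbove (Set.range fun E : {E : Set (Fin d → ℝ) // E ∈ 𝓔 ∧ E ⊆ Q} =>
      JS volume f E.1 s) := by
    refine ⟨1/2, ?_⟩
    rintro x ⟨E, rfl⟩
    exact hfJ E.1 E.2.1 E.2.2
  set K := ⨆ E : {E : Set (Fin d → ℝ) // E ∈ 𝓔 ∧ E ⊆ Q}, JS volume f E.1 s with hKdef
  have hKQ : ∀ W, W ∈ 𝓔 → W ⊆ Q → JS volume f W s ≤ K :=
    fun W hW hWQ => le_ciSup hbdd ⟨W, hW, hWQ⟩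
  have hK0 : 0 ≤ K := le_trans (JS_nonneg volume f Q s) (hKQ Q hQ subset_rfl)
  -- rearrangement characterization
  have hrearr : ∀ t : ℝ, 0 < t → ∀ hex : ∃ m, mE m ≤ ENNReal.ofReal t,
      rearr volume g t = (Nat.find hex : ℝ) := by
    intro t ht hex
    have hNspec : mE (Nat.find hex) ≤ ENNReal.ofReal t := Nat.find_spec hex
    have hkey : ∀ α : ℝ, 0 < α → volume {x | α < g x} = mE ⌊α⌋₊ := by
      intro α hα
      have : {x | α < g x} = A ⌊α⌋₊ := by
        ext x
        obtain ⟨k, hk⟩ := hgnat x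
        simp only [mem_setOf_eq, hAdef, hk]
        constructor
        · intro h
          have h' : α < (k:ℕ) := by exact_mod_cast h
          have := (Nat.floor_lt hα.le).2 h'
          exact_mod_cast this
        · intro h
          have h' : ⌊α⌋₊ < k := by exact_mod_cast h
          exact (Nat.floor_lt hα.le).1 h'
      rw [this, hmdef]
    have hiff : ∀ α : ℝ, 0 < α →
        (volume {x | α < g x} ≤ ENNReal.ofReal t ↔ ((Nat.find hex : ℕ):ℝ) ≤ α) := by
      intro α hα
      rw [hkey α hα]
      constructor
      · intro h
        have h1 : Nat.find hex ≤ ⌊α⌋₊ := Nat.find_le h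
        exact le_trans (by exact_mod_cast h1) (Nat.floor_le hα.le)
      · intro h
        have h1 : Nat.find hex ≤ ⌊α⌋₊ := (Nat.le_floor_iff hα.le).2 h
        exact le_trans (hmanti _ _ h1) hNspec
    have hset : {α : ℝ | 0 < α ∧ volume {x | α < g x} ≤ ENNReal.ofReal t}
        = {α : ℝ | 0 < α ∧ ((Nat.find hex : ℕ):ℝ) ≤ α} := by
      ext α
      simp only [mem_setOf_eq]
      constructor
      · rintro ⟨h1, h2⟩; exact ⟨h1, (hiff α h1).1 h2⟩
      · rintro ⟨h1, h2⟩; exact ⟨h1, (hiff α h1).2 h2⟩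
    show sInf {α : ℝ | 0 < α ∧ volume {x | α < g x} ≤ ENNReal.ofReal t} = _
    rw [hset]
    rcases Nat.eq_zero_or_pos (Nat.find hex) with hN | hN
    · rw [hN]
      have : {α : ℝ | 0 < α ∧ ((0:ℕ):ℝ) ≤ α} = Ioi (0:ℝ) := by
        ext α; simp only [mem_setOf_eq, Nat.cast_zero, mem_Ioi]
        exact ⟨fun h => h.1, fun h => ⟨h, h.le⟩⟩
      rw [this, csInf_Ioi]; simp
    · have hNpos : (0:ℝ) < (Nat.find hex : ℝ) := by exact_mod_cast hN
      have : {α : ℝ | 0 < α ∧ ((Nat.find hex : ℕ):ℝ) ≤ α} = Ici ((Nat.find hex : ℕ):ℝ) := by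
        ext α; simp only [mem_setOf_eq, mem_Ici]
        exact ⟨fun h => h.2, fun h => ⟨lt_of_lt_of_le hNpos h, h⟩⟩
      rw [this, csInf_Ici]
  -- combinatorial lemma from the JS pair condition
  have hCL : ∀ p : ℕ, min (volume Q - mE p) (mE (p+1))
      ≤ ENNReal.ofReal τ * (mE p - mE (p+1)) := by
    intro p
    by_contra hcon
    push_neg at hcon
    have hsub : A (p+1) ⊆ A p := hAanti (Nat.le_succ p)
    have hEp : volume (Q \ A p) = volume Q - mE p :=
      measure_diff (hAQ p) (hAmeas p).nullMeasurableSet (hmfin p)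
    have hG : volume (A p \ A (p+1)) = mE p - mE (p+1) :=
      measure_diff hsub (hAmeas (p+1)).nullMeasurableSet (hmfin (p+1))
    have hQeq : Q = (Q \ A p) ∪ A (p+1) ∪ (A p \ A (p+1)) := by
      ext x
      constructor
      · intro hx
        by_cases h1 : x ∈ A (p+1)
        · exact Or.inl (Or.inr h1)
        · by_cases h2 : x ∈ A p
          · exact Or.inr ⟨h2, h1⟩
          · exact Or.inl (Or.inl ⟨hx, h2⟩)
      · rintro ((h | h) | h)
        exacts [h.1, hAQ _ h, hAQ p h.1]
    have hd1 : Disjoint (Q \ A p) (A (p+1)) := disjoint_sdiff_left.mono_right hsub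
    have hd2 : Disjoint (Q \ A p) (A p \ A (p+1)) := disjoint_sdiff_left.mono_right diff_subset
    have hd3 : Disjoint (A (p+1)) (A p \ A (p+1)) := disjoint_sdiff_left.symm
    obtain ⟨W, hW𝓔, hWQ, hWmin⟩ := hpairmain Q hQ (Q \ A p) (A (p+1)) (A p \ A (p+1))
      (measQ.diff (hAmeas p)) (hAmeas (p+1)) ((hAmeas p).diff (hAmeas (p+1)))
      hd1 hd2 hd3 hQeq (by rw [hG, hEp]; exact hcon)
    obtain ⟨hWmeas, hWpos, hWfin⟩ := h𝓔 W hW𝓔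
    have h1 : (2:ℝ)/2 ≤ JS volume f W s := by
      refine JS_ge volume f hf W hWmeas hWpos hWfin s hs0 (W ∩ (Q \ A p)) (W ∩ A (p+1))
        inter_subset_left inter_subset_left (p:ℝ) 2 ?_ ?_ hWmin
      · rintro x ⟨hxW, hxQ, hxA⟩
        rw [hAf] at hxA
        by_contra hlt
        push_neg at hlt
        exact hxA ⟨hxQ, hlt⟩
      · rintro x ⟨hxW, hxA⟩
        rw [hAf] at hxA
        obtain ⟨hxQ, hlt⟩ := hxA
        obtain ⟨k, hk⟩ := hfnat x hxQ
        rw [hk] at hlt ⊢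
        have h1 : p + 1 < k := by exact_mod_cast hlt
        have h2 : p + 2 ≤ k := h1
        calc (p:ℝ) + 2 = ((p+2:ℕ):ℝ) := by push_cast; ring
          _ ≤ (k:ℝ) := by exact_mod_cast h2
    have h2 := hfJ W hW𝓔 hWQ
    norm_num at h1
    linarith
  -- real-valued sequence
  set M := (volume Q).toReal with hMdef
  set w : ℕ → ℝ := fun n => (mE n).toReal with hwdef
  set Wf : ℕ → ℝ := fun k => Nat.rec M (fun k _ => w k) k with hWfdef
  have hWf0 : Wf 0 = M := rfl
  have hWfs : ∀ k, Wf (k+1) = w k := fun k => rfl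
  have hWanti : Antitone Wf := by
    refine antitone_nat_of_succ_le ?_
    intro k
    cases k with
    | zero =>
      show w 0 ≤ M
      exact ENNReal.toReal_mono hQfin.ne (hmQ 0)
    | succ k =>
      show w (k+1) ≤ w k
      exact ENNReal.toReal_mono (hmfin k) (hmanti k (k+1) (Nat.le_succ k))
  have hrCL : ∀ k, min (M - Wf k) (Wf (k + 1)) ≤ τ * (Wf k - Wf (k + 1)) := by
    intro k
    cases k with
    | zero =>
      show min (M - M) (w 0) ≤ τ * (M - w 0)
      have h1 : w 0 ≤ M := ENNReal.toReal_mono hQfin.ne (hmQ 0)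
      have h2 : min (M - M) (w 0) ≤ 0 := by
        rw [sub_self]; exact min_le_left _ _
      exact le_trans h2 (mul_nonneg hτ0.le (by linarith))
    | succ k =>
      show min (M - w k) (w (k+1)) ≤ τ * (w k - w (k+1))
      have h := hCL k
      have hne1 : volume Q - mE k ≠ ⊤ := ne_top_of_le_ne_top hQfin.ne tsub_le_self
      have hne2 : mE k - mE (k+1) ≠ ⊤ := ne_top_of_le_ne_top (hmfin k) tsub_le_self
      have hlhs : (min (volume Q - mE k) (mE (k+1))).toReal = min (M - w k) (w (k+1)) := by
        rw [ENNReal.toReal_min hne1 (hmfin (k+1)),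
          ENNReal.toReal_sub_of_le (hmQ k) hQfin.ne]
      have hrhs : (ENNReal.ofReal τ * (mE k - mE (k+1))).toReal = τ * (w k - w (k+1)) := by
        rw [ENNReal.toReal_mul, ENNReal.toReal_ofReal hτ0.le,
          ENNReal.toReal_sub_of_le (hmanti k (k+1) (Nat.le_succ k)) (hmfin k)]
      calc min (M - w k) (w (k+1)) = (min (volume Q - mE k) (mE (k+1))).toReal := hlhs.symm
        _ ≤ (ENNReal.ofReal τ * (mE k - mE (k+1))).toReal :=
            ENNReal.toReal_mono (ENNReal.mul_ne_top ENNReal.ofReal_ne_top hne2) h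
        _ = τ * (w k - w (k+1)) := hrhs
  have hsmallW : ∃ k, Wf k ≤ a := by
    obtain ⟨m, hm⟩ := hsmallE
    refine ⟨m + 1, ?_⟩
    rw [hWfs]
    calc w m ≤ (ENNReal.ofReal a).toReal := ENNReal.toReal_mono ENNReal.ofReal_ne_top hm
      _ = a := ENNReal.toReal_ofReal ha.le
  obtain ⟨i, hi1, hTT⟩ := select ha hab hb hτ0 hσ1 Wf hWanti hWf0 hrCL hsmallW
  set n := i - 1 with hndef
  have hin : i = n + 1 := (Nat.succ_pred_eq_of_pos hi1).symm
  have hexN : ∀ t : ℝ, a ≤ t → ∃ m, mE m ≤ ENNReal.ofReal t := by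
    intro t ht
    obtain ⟨m, hm⟩ := hsmallE
    exact ⟨m, le_trans hm (ENNReal.ofReal_le_ofReal ht)⟩
  have hIccvol : volume (Icc a b) = ENNReal.ofReal (b - a) := Real.volume_Icc
  -- the bad set bound
  have hBad : volume {t ∈ Icc a b | rearr volume g t ∉ ({(n:ℝ), (n:ℝ)+1} : Set ℝ)}
      < ENNReal.ofReal σ * volume (Icc a b) := by
    set u := Wf (i + 1) with hudef
    set v := Wf (i - 1) with hvdef
    have huw : u = (mE (n+1)).toReal := by rw [hudef, hin]
    have hsubbad : {t ∈ Icc a b | rearr volume g t ∉ ({(n:ℝ), (n:ℝ)+1} : Set ℝ)}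
        ⊆ Icc a (min u b) ∪ Icc (max v a) b := by
      rintro t ⟨htI, htn⟩
      have ht0 : 0 < t := lt_of_lt_of_le ha htI.1
      have hex := hexN t htI.1
      rw [hrearr t ht0 hex] at htn
      simp only [mem_insert_iff, mem_singleton_iff, not_or] at htn
      obtain ⟨hne1, hne2⟩ := htn
      have hne1' : Nat.find hex ≠ n := by
        intro h; exact hne1 (by rw [h])
      have hne2' : Nat.find hex ≠ n + 1 := by
        intro h; exact hne2 (by rw [h]; push_cast; ring)
      rcases lt_or_ge (Nat.find hex) n with hlt | hge
      · right
        have hn1 : n - 1 + 1 = n := by omega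
        have hvw : v = (mE (n-1)).toReal := by
          have h0 : Wf ((n-1)+1) = (mE (n-1)).toReal := rfl
          rw [hvdef, hin]
          show Wf n = _
          rw [← hn1]
          exact h0
        have hmle : mE (n-1) ≤ ENNReal.ofReal t :=
          le_trans (hmanti (Nat.find hex) (n-1) (by omega)) (Nat.find_spec hex)
        have hvt : v ≤ t := by
          rw [hvw]
          calc (mE (n-1)).toReal ≤ (ENNReal.ofReal t).toReal :=
              ENNReal.toReal_mono ENNReal.ofReal_ne_top hmle
            _ = t := ENNReal.toReal_ofReal ht0.le
        exact ⟨max_le hvt htI.1, htI.2⟩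
      · left
        have hN2 : n + 1 < Nat.find hex := by omega
        have hnot : ¬ mE (n+1) ≤ ENNReal.ofReal t := Nat.find_min hex hN2
        have htu : t < (mE (n+1)).toReal :=
          (ENNReal.ofReal_lt_iff_lt_toReal ht0.le (hmfin (n+1))).1 (not_le.1 hnot)
        exact ⟨htI.1, le_min (by rw [huw]; exact htu.le) htI.2⟩
    calc volume {t ∈ Icc a b | rearr volume g t ∉ ({(n:ℝ), (n:ℝ)+1} : Set ℝ)}
        ≤ volume (Icc a (min u b) ∪ Icc (max v a) b) := measure_mono hsubbad
      _ ≤ volume (Icc a (min u b)) + volume (Icc (max v a) b) := measure_union_le _ _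
      _ = ENNReal.ofReal (min u b - a) + ENNReal.ofReal (b - max v a) := by
          rw [Real.volume_Icc, Real.volume_Icc]
      _ ≤ ENNReal.ofReal (max (min u b - a) 0) + ENNReal.ofReal (max (b - max v a) 0) :=
          add_le_add (ENNReal.ofReal_le_ofReal (le_max_left _ _))
            (ENNReal.ofReal_le_ofReal (le_max_left _ _))
      _ = ENNReal.ofReal (max (min u b - a) 0 + max (b - max v a) 0) :=
          (ENNReal.ofReal_add (le_max_right _ _) (le_max_right _ _)).symm
      _ < ENNReal.ofReal (σ * (b - a)) :=
          (ENNReal.ofReal_lt_ofReal_iff (by nlinarith)).2 hTT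
      _ = ENNReal.ofReal σ * volume (Icc a b) := by
          rw [hIccvol, ENNReal.ofReal_mul hσpos.le]
  by_cases hKhalf : 1/2 ≤ K
  · refine JS_le volume _ (Icc a b) σ K hK0 ⟨(n:ℝ) + 1/2, lt_of_le_of_lt (measure_mono ?_) hBad⟩
    rintro t ⟨htI, habs⟩
    refine ⟨htI, fun hmem => ?_⟩
    rcases hmem with h | h
    · rw [h] at habs
      have he : (n:ℝ) - ((n:ℝ) + 1/2) = -(1/2) := by ring
      rw [he, abs_neg, abs_of_nonneg (by norm_num : (0:ℝ) ≤ 1/2)] at habs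
      linarith
    · rw [h] at habs
      have he : (n:ℝ) + 1 - ((n:ℝ) + 1/2) = 1/2 := by ring
      rw [he, abs_of_nonneg (by norm_num : (0:ℝ) ≤ 1/2)] at habs
      linarith
  · push_neg at hKhalf
    have hofb : ENNReal.ofReal b < volume Q :=
      (ENNReal.ofReal_lt_iff_lt_toReal (by linarith) hQfin.ne).2 hb
    have hdich : ∀ p : ℕ, mE p = 0 ∨ mE p = volume Q := by
      intro p
      by_contra hc
      push_neg at hc
      obtain ⟨h1, h2⟩ := hc
      have hQeq : Q = (Q \ A p) ∪ A p ∪ (∅ : Set (Fin d → ℝ)) := by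
        rw [union_empty, diff_union_of_subset (hAQ p)]
      obtain ⟨W, hW𝓔, hWQ, hWmin⟩ := hpairmain Q hQ (Q \ A p) (A p) ∅
        (measQ.diff (hAmeas p)) (hAmeas p) MeasurableSet.empty
        disjoint_sdiff_left disjoint_bot_right disjoint_bot_right hQeq
        (by
          rw [measure_empty, mul_zero]
          refine lt_min ?_ ?_
          · rw [measure_diff (hAQ p) (hAmeas p).nullMeasurableSet (hmfin p)]
            exact tsub_pos_iff_lt.2 (lt_of_le_of_ne (hmQ p) h2)
          · exact pos_iff_ne_zero.2 h1)
      obtain ⟨hWmeas, hWpos, hWfin⟩ := h𝓔 W hW𝓔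
      have h1' : (1:ℝ)/2 ≤ JS volume f W s := by
        refine JS_ge volume f hf W hWmeas hWpos hWfin s hs0 (W ∩ (Q \ A p)) (W ∩ A p)
          inter_subset_left inter_subset_left (p:ℝ) 1 ?_ ?_ hWmin
        · rintro x ⟨hxW, hxQ, hxA⟩
          rw [hAf] at hxA
          by_contra hlt
          push_neg at hlt
          exact hxA ⟨hxQ, hlt⟩
        · rintro x ⟨hxW, hxA⟩
          rw [hAf] at hxA
          obtain ⟨hxQ, hlt⟩ := hxA
          obtain ⟨k, hk⟩ := hfnat x hxQ
          rw [hk] at hlt ⊢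
          have hpk : p < k := by exact_mod_cast hlt
          have hpk2 : p + 1 ≤ k := hpk
          calc (p:ℝ) + 1 = ((p+1:ℕ):ℝ) := by push_cast; ring
            _ ≤ (k:ℝ) := by exact_mod_cast hpk2
      linarith [hKQ W hW𝓔 hWQ]
    have hconstN : ∀ t, t ∈ Icc a b → ∀ hex : ∃ m, mE m ≤ ENNReal.ofReal t,
        mE (Nat.find hex) = 0 := by
      intro t htI hex
      rcases hdich (Nat.find hex) with h | h
      · exact h
      · exfalso
        have hsp := Nat.find_spec hex
        rw [h] at hsp
        exact absurd (lt_of_le_of_lt (le_trans hsp (ENNReal.ofReal_le_ofReal htI.2)) hofb)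
          (lt_irrefl _)
    have hexa : ∃ m, mE m ≤ ENNReal.ofReal a := hexN a le_rfl
    set N₀ := Nat.find hexa with hN₀def
    have hconst' : ∀ t, t ∈ Icc a b → rearr volume g t = (N₀ : ℝ) := by
      intro t htI
      have ht0 : 0 < t := lt_of_lt_of_le ha htI.1
      have hex := hexN t htI.1
      rw [hrearr t ht0 hex]
      congr 1
      refine le_antisymm ?_ ?_
      · refine Nat.find_le ?_
        rw [hconstN a ⟨le_rfl, hab.le⟩ hexa]
        exact zero_le
      · refine Nat.find_le ?_
        rw [hconstN t htI hex]
        exact zero_le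
    have hzero : {t ∈ Icc a b | (0:ℝ) < |rearr volume g t - (N₀:ℝ)|} = ∅ := by
      ext t
      simp only [mem_setOf_eq, mem_empty_iff_false, iff_false, not_and]
      intro htI
      rw [hconst' t htI]
      simp
    refine le_trans (JS_le volume _ (Icc a b) σ 0 le_rfl ⟨(N₀:ℝ), ?_⟩) hK0
    rw [hzero, measure_empty]
    refine ENNReal.mul_pos (ENNReal.ofReal_pos.2 hσpos).ne' ?_
    rw [hIccvol]
    exact (ENNReal.ofReal_pos.2 (by linarith)).ne'
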